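/- Let ε be a real number with 3 ≤ ε < 4√2 − 1, and let Z be a nonnegative real-valued random variable with finite second moment satisfying σ²[Z] ≤ E[Z]. If E[Z] ≥ 4·pivot(ε), then P(Z < thresh(ε)) ≤ 1/18.19. -/

import Mathlib

open MeasureTheory ProbabilityTheory

/-- `pivot ε = 9.84·(1 + 1/ε)²`. -/
noncomputable def pivot (ε : ℝ) : ℝ := 9.84 * (1 + 1 / ε) ^ 2

/-- `thresh ε = 9.84·(1 + ε/(1+ε))·(1 + 1/ε)²`. -/
noncomputable def thresh (ε : ℝ) : ℝ := 9.84 * (1 + ε / (1 + ε)) * (1 + 1 / ε) ^ 2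

set_option maxHeartbeats 1000000 in
theorem stmt_18 {Ω : Type*} [MeasurableSpace Ω] (μ : Measure Ω) [IsProbabilityMeasure μ]
    (ε : ℝ) (hlo : 3 ≤ ε) (hhi : ε < 4 * Real.sqrt 2 - 1)
    (Z : Ω → ℝ) (hZnonneg : ∀ ω, 0 ≤ Z ω) (hL2 : MemLp Z 2 μ)
    (hvar : variance Z μ ≤ ∫ x, Z x ∂μ)
    (hE : 4 * pivot ε ≤ ∫ x, Z x ∂μ) :
    (μ {ω | Z ω < thresh ε}).toReal ≤ 1 / 18.19 := by
  have hε0 : (0:ℝ) < ε := by linarith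
  have h1ε : (0:ℝ) < 1 + ε := by linarith
  set u : ℝ := 1 / ε with hu
  have hu0 : 0 < u := by positivity
  -- √2 < 1.41422
  have hs2 : Real.sqrt 2 < 1.41422 := by
    nlinarith [Real.sq_sqrt (by norm_num : (0:ℝ) ≤ 2), Real.sqrt_nonneg 2]
  have hεub : ε < 4.65688 := by nlinarith
  have hu_lb : 0.2147 < u := by
    rw [hu, lt_div_iff₀ hε0]; nlinarith
  set m : ℝ := ∫ x, Z x ∂μ with hm
  set v : ℝ := variance Z μ with hv
  set t : ℝ := thresh ε with ht
  set p : ℝ := pivot ε with hp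
  have hp_eq : p = 9.84 * (1 + u) ^ 2 := rfl
  have hp_pos : 0 < p := by rw [hp_eq]; positivity
  have hA : 4 * p - t = 9.84 * (1 + u) * (2 + 3 * u) := by
    rw [hp, ht, pivot, thresh, hu]
    field_simp
    ring
  have hA_lb : (19.68:ℝ) ≤ 4 * p - t := by rw [hA]; nlinarith
  have hkey : (68.76:ℝ) ≤ 9.84 * (2 + 3 * u) ^ 2 := by nlinarith
  have hA2 : 68.76 * p ≤ (4 * p - t) ^ 2 := by
    rw [hA, hp_eq]; nlinarith [sq_nonneg (1 + u)]
  have hm4p : 4 * p ≤ m := hE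
  set a : ℝ := m - t with ha_def
  have ha_lb : (19.68:ℝ) ≤ a := by simp only [ha_def]; linarith
  have ha : 0 < a := by linarith
  have hd : 0 ≤ m - 4 * p := by linarith
  have hmain : 17.19 * m ≤ a ^ 2 := by
    have hsq : a ^ 2 = (m - 4*p)^2 + 2*(m - 4*p)*(4*p - t) + (4*p - t)^2 := by
      simp only [ha_def]; ring
    have h2d : 39.36 * (m - 4*p) ≤ 2*(m - 4*p)*(4*p - t) := by
      nlinarith [mul_nonneg hd (show (0:ℝ) ≤ 2*(4*p - t) - 39.36 by linarith)]
    linarith [sq_nonneg (m - 4*p), hsq, h2d, hA2, hd]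
  have hv0 : 0 ≤ v := variance_nonneg Z μ
  have hm0 : 0 < m := lt_of_lt_of_le (by positivity) hm4p
  set c : ℝ := v / a with hc
  have hc0 : 0 ≤ c := div_nonneg hv0 ha.le
  have hb : 0 < a + c := by linarith
  -- the auxiliary function
  set g : Ω → ℝ := fun ω => (Z ω - (m + c)) ^ 2 with hg
  have hZ1 : Integrable Z μ := hL2.integrable one_le_two
  have hsubL2 : MemLp (fun ω => Z ω - (m + c)) 2 μ := by
    exact hL2.sub (memLp_const (m + c))
  have hgint : Integrable g μ := by
    have := hsubL2.integrable_sq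
    simpa [hg, Pi.pow_apply] using this
  -- integral of g is v + c²
  have hZ2 : Integrable (fun ω => Z ω ^ 2) μ := by
    have := hL2.integrable_sq
    simpa [Pi.pow_apply] using this
  have hvdef : v = (∫ x, Z x ^ 2 ∂μ) - m ^ 2 := by
    rw [hv, variance_eq_sub hL2]
    simp [hm]
  have hgeq : g = fun ω => (Z ω ^ 2 - 2 * (m + c) * Z ω) + (m + c) ^ 2 := by
    funext ω; simp only [hg]; ring
  have hgintegral : ∫ x, g x ∂μ = v + c ^ 2 := by
    have h1 : ∫ x, ((Z x ^ 2 - 2 * (m + c) * Z x) + (m + c) ^ 2) ∂μ = v + c ^ 2 := by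
      have hintc : Integrable (fun x => 2 * (m + c) * Z x) μ := hZ1.const_mul _
      have hint1 : Integrable (fun x => Z x ^ 2 - 2 * (m + c) * Z x) μ := hZ2.sub hintc
      rw [integral_add hint1 (integrable_const _),
        integral_sub hZ2 hintc, integral_const_mul, integral_const]
      simp only [measure_univ, probReal_univ, ENNReal.toReal_one, smul_eq_mul, one_mul]
      rw [hvdef]; ring
    rw [← h1]
    apply integral_congr_ae
    filter_upwards with ω
    simp only [hg]; ring
  -- Markov
  have hmarkov := mul_meas_ge_le_integral_of_nonneg
    (ae_of_all μ (fun ω => sq_nonneg (Z ω - (m + c)))) hgint ((a + c) ^ 2)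
  -- event inclusion
  have hsub : {ω | Z ω < t} ⊆ {x | (a + c) ^ 2 ≤ g x} := by
    intro ω hω
    have h1 : a + c ≤ (m + c) - Z ω := by
      simp only [Set.mem_setOf_eq] at hω; simp only [ha_def]; linarith
    have h2 : (a + c) ^ 2 ≤ ((m + c) - Z ω) ^ 2 := by nlinarith
    simpa [hg, Set.mem_setOf_eq] using h2.trans_eq (by ring)
  have hmeas1 : (μ {ω | Z ω < t}).toReal ≤ (μ {x | (a + c) ^ 2 ≤ g x}).toReal :=
    ENNReal.toReal_mono (measure_ne_top _ _) (measure_mono hsub)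
  have hmeas2 : (μ {x | (a + c) ^ 2 ≤ g x}).toReal ≤ (v + c ^ 2) / (a + c) ^ 2 := by
    rw [le_div_iff₀ (by positivity)]
    calc (μ {x | (a + c) ^ 2 ≤ g x}).toReal * (a + c) ^ 2
        = (a + c) ^ 2 * (μ {x | (a + c) ^ 2 ≤ g x}).toReal := by ring
      _ ≤ ∫ x, g x ∂μ := hmarkov
      _ = v + c ^ 2 := hgintegral
  have heq : (v + c ^ 2) / (a + c) ^ 2 = v / (a ^ 2 + v) := by
    rw [hc]
    have hav : (0:ℝ) < a ^ 2 + v := by positivity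
    field_simp
  have hfinal : v / (a ^ 2 + v) ≤ 1 / 18.19 := by
    rw [div_le_div_iff₀ (by positivity) (by norm_num)]
    nlinarith
  calc (μ {ω | Z ω < thresh ε}).toReal ≤ (v + c ^ 2) / (a + c) ^ 2 := hmeas1.trans hmeas2
    _ = v / (a ^ 2 + v) := heq
    _ ≤ 1 / 18.19 := hfinal
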